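/- arXiv:2311.18418 — 2 statements merged into one kernel-verified Lean document; each statement's English description precedes it below -/
import Mathlib

section
/- Let A, B ∈ C^{N×N} be Hermitian with A positive semidefinite and B positive definite, and let v ∈ C^N. For λ ≥ 0 define φ(λ) = (A + λ B)^{-1} v (well-defined since A + λB is positive definite for λ > 0, and assume A + λB invertible for λ = 0 as well, e.g. A positive definite). Then the function g(λ) = φ(λ)^H B φ(λ) is non-increasing in λ on [0, ∞). -/
open Matrix BigOperators ComplexOrder

lemma smul_posSemidef_aux {N : ℕ} {B : Matrix (Fin N) (Fin N) ℂ} (hB : B.PosDef) {l : ℝ}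
    (hl : 0 ≤ l) : ((l : ℂ) • B).PosSemidef := by
  refine Matrix.PosSemidef.of_dotProduct_mulVec_nonneg ?_ ?_
  · unfold Matrix.IsHermitian
    rw [conjTranspose_smul, hB.isHermitian.eq]
    simp [Complex.star_def, Complex.conj_ofReal]
  · intro x
    rw [smul_mulVec, dotProduct_smul, smul_eq_mul]
    exact mul_nonneg (by exact_mod_cast hl) (hB.posSemidef.dotProduct_mulVec_nonneg x)

/-- g(λ) = φ(λ)ᴴ B φ(λ) with φ(λ) = (A + λB)⁻¹ v is
non-increasing on [0, ∞), for A ≻ 0 and B ≻ 0 Hermitian. -/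
theorem power_fn_antitone
    (N : ℕ) (A B : Matrix (Fin N) (Fin N) ℂ)
    (hA : A.PosDef) (hB : B.PosDef) (v : Fin N → ℂ)
    (φ : ℝ → (Fin N → ℂ))
    (hφ : ∀ l : ℝ, φ l = (A + (l : ℂ) • B)⁻¹ *ᵥ v)
    (g : ℝ → ℝ)
    (hg : ∀ l : ℝ, g l = (star (φ l) ⬝ᵥ (B *ᵥ φ l)).re) :
    ∀ l₁ l₂ : ℝ, 0 ≤ l₁ → l₁ ≤ l₂ → g l₂ ≤ g l₁ := by
  intro l₁ l₂ hl₁ hl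
  set M₁ := A + (l₁ : ℂ) • B with hM₁def
  set M₂ := A + (l₂ : ℂ) • B with hM₂def
  have hM₁ : M₁.PosDef := hA.add_posSemidef (smul_posSemidef_aux hB hl₁)
  have hM₂ : M₂.PosDef := hA.add_posSemidef (smul_posSemidef_aux hB (hl₁.trans hl))
  have hM₁det : IsUnit M₁.det := (isUnit_iff_isUnit_det _).1 hM₁.isUnit
  have hM₂det : IsUnit M₂.det := (isUnit_iff_isUnit_det _).1 hM₂.isUnit
  set δ : ℝ := l₂ - l₁ with hδdef
  have hδ : 0 ≤ δ := sub_nonneg.2 hl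
  set w := φ l₂ with hwdef
  set y := B *ᵥ w with hydef
  set z := M₁⁻¹ *ᵥ y with hzdef
  have hv : M₂ *ᵥ w = v := by
    rw [hwdef, hφ, mulVec_mulVec, Matrix.mul_nonsing_inv _ hM₂det, one_mulVec]
  have hM₂eq : M₂ = M₁ + (δ : ℂ) • B := by
    rw [hM₁def, hM₂def, hδdef]
    push_cast
    rw [sub_smul]
    abel
  have hφ1 : φ l₁ = w + (δ : ℂ) • z := by
    rw [hφ, ← hM₁def, ← hv, hM₂eq, add_mulVec, smul_mulVec, mulVec_add, mulVec_smul,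
      mulVec_mulVec, Matrix.nonsing_inv_mul _ hM₁det, one_mulVec, hzdef, hydef]
  -- key nonneg quantities
  have hM₁inv : M₁⁻¹.PosSemidef := hM₁.inv.posSemidef
  have hstarz : star z = star y ᵥ* M₁⁻¹ := by
    rw [hzdef, star_mulVec, hM₁.inv.isHermitian.eq]
  have h1 : star z ⬝ᵥ y = star y ⬝ᵥ (M₁⁻¹ *ᵥ y) := by
    rw [hstarz, ← dotProduct_mulVec]
  have h2 : star w ⬝ᵥ (B *ᵥ z) = star y ⬝ᵥ (M₁⁻¹ *ᵥ y) := by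
    rw [dotProduct_mulVec, ← hB.isHermitian.eq, ← star_mulVec, ← hydef, hzdef]
  have hq1 : 0 ≤ (star y ⬝ᵥ (M₁⁻¹ *ᵥ y)).re := hM₁inv.re_dotProduct_nonneg y
  have hq3 : 0 ≤ (star z ⬝ᵥ (B *ᵥ z)).re := hB.posSemidef.re_dotProduct_nonneg z
  have expand : star (φ l₁) ⬝ᵥ (B *ᵥ φ l₁)
      = star w ⬝ᵥ y + (δ : ℂ) * (star z ⬝ᵥ y) + (δ : ℂ) * (star w ⬝ᵥ (B *ᵥ z))
        + (δ : ℂ) * (δ : ℂ) * (star z ⬝ᵥ (B *ᵥ z)) := by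
    rw [hφ1]
    simp only [mulVec_add, mulVec_smul, star_add, star_smul, dotProduct_add, add_dotProduct,
      dotProduct_smul, smul_dotProduct, smul_eq_mul, Complex.star_def, Complex.conj_ofReal,
      hydef]
    ring
  have : g l₁ = g l₂ + δ * (star y ⬝ᵥ (M₁⁻¹ *ᵥ y)).re + δ * (star y ⬝ᵥ (M₁⁻¹ *ᵥ y)).re
      + δ * δ * (star z ⬝ᵥ (B *ᵥ z)).re := by
    rw [hg, hg, expand, h1, h2, ← hwdef, ← hydef]
    simp [Complex.add_re, Complex.re_ofReal_mul, mul_assoc]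
  rw [this]
  nlinarith
end

section
/- Let A ⪰ 0 and B ≻ 0 be Hermitian matrices in C^{N×N} with A + λB invertible for all λ ≥ 0, let v ∈ C^N, and P_r > 0. If λ ≥ sqrt(v^H B^{-1} v / P_r), then φ(λ) = (A + λB)^{-1} v satisfies φ(λ)^H B φ(λ) ≤ P_r. -/
open Matrix BigOperators ComplexOrder

/-- If λ ≥ sqrt(vᴴ B⁻¹ v / P_r) then φ(λ) = (A+λB)⁻¹ v satisfies
the power constraint φ(λ)ᴴ B φ(λ) ≤ P_r. -/
theorem lagrange_multiplier_upper_bound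
    (N : ℕ) (A B : Matrix (Fin N) (Fin N) ℂ)
    (hA : A.PosSemidef) (hB : B.PosDef)
    (hInv : ∀ l : ℝ, 0 ≤ l → IsUnit (A + (l : ℂ) • B))
    (v : Fin N → ℂ) (Pr : ℝ) (hPr : 0 < Pr)
    (l : ℝ) (hl : Real.sqrt ((star v ⬝ᵥ (B⁻¹ *ᵥ v)).re / Pr) ≤ l) :
    (star ((A + (l : ℂ) • B)⁻¹ *ᵥ v) ⬝ᵥ (B *ᵥ ((A + (l : ℂ) • B)⁻¹ *ᵥ v))).re ≤ Pr := by
  have hl0 : 0 ≤ l := (Real.sqrt_nonneg _).trans hl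
  set M : Matrix (Fin N) (Fin N) ℂ := A + (l : ℂ) • B with hMdef
  have hMu : IsUnit M.det := (Matrix.isUnit_iff_isUnit_det M).mp (hInv l hl0)
  set φ : Fin N → ℂ := M⁻¹ *ᵥ v with hφ
  have hMφ : M *ᵥ φ = v := by
    rw [hφ, mulVec_mulVec, Matrix.mul_nonsing_inv _ hMu, one_mulVec]
  set t : ℝ := (star v ⬝ᵥ B⁻¹ *ᵥ v).re with htdef
  set x : ℝ := (star φ ⬝ᵥ B *ᵥ φ).re with hxdef
  have hBinv : (B⁻¹).PosDef := hB.inv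
  have ht0 : 0 ≤ t := hBinv.posSemidef.re_dotProduct_nonneg v
  have hx0 : 0 ≤ x := hB.posSemidef.re_dotProduct_nonneg φ
  have htPr : t ≤ Pr * l ^ 2 := by
    have hsq := Real.sq_sqrt (div_nonneg ht0 hPr.le)
    have h1 : t / Pr ≤ l ^ 2 := by
      nlinarith [Real.sqrt_nonneg (t / Pr)]
    calc t = (t / Pr) * Pr := by field_simp
    _ ≤ l ^ 2 * Pr := by nlinarith
    _ = Pr * l ^ 2 := by ring
  rcases eq_or_lt_of_le hl0 with hl0' | hlpos
  · -- l = 0 : then t = 0, so v = 0, so φ = 0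
    have hv : v = 0 := by
      by_contra hv
      have hpos : 0 < t := by
        simpa [htdef] using hBinv.re_dotProduct_pos hv
      rw [← hl0'] at htPr
      nlinarith
    rw [hxdef, hφ, hv]
    simpa using hPr.le
  · -- main case l > 0
    -- Step B: l * x ≤ re (star φ ⬝ᵥ v)
    have hAφ : 0 ≤ (star φ ⬝ᵥ A *ᵥ φ).re := hA.re_dotProduct_nonneg φ
    have hsplit : (star φ ⬝ᵥ v).re = (star φ ⬝ᵥ A *ᵥ φ).re + l * x := by
      rw [← hMφ, hMdef]
      simp [Matrix.add_mulVec, Matrix.smul_mulVec, dotProduct_add,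
        dotProduct_smul, smul_eq_mul, Complex.add_re, Complex.mul_re,
        Complex.ofReal_re, Complex.ofReal_im, hxdef]
    -- square root of B
    have hSps := hB.posSemidef
    open scoped MatrixOrder in
    set S : Matrix (Fin N) (Fin N) ℂ := CFC.sqrt B with hSdef
    open scoped MatrixOrder in
    have hSH : Sᴴ = S := (Matrix.nonneg_iff_posSemidef.mp (CFC.sqrt_nonneg B)).1
    open scoped MatrixOrder in
    have hSS : S * S = B := CFC.sqrt_mul_sqrt_self B hSps.nonneg
    have hSu : IsUnit S.det := by
      have hBu : IsUnit B.det := (Matrix.isUnit_iff_isUnit_det B).mp hB.isUnit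
      rw [← hSS, Matrix.det_mul] at hBu
      exact (IsUnit.mul_iff.mp hBu).1
    have h1 : star (S *ᵥ φ) ⬝ᵥ (S *ᵥ φ) = star φ ⬝ᵥ B *ᵥ φ := by
      rw [star_mulVec, hSH, dotProduct_mulVec, vecMul_vecMul, hSS, ← dotProduct_mulVec]
    have h2 : star (S *ᵥ φ) ⬝ᵥ (S⁻¹ *ᵥ v) = star φ ⬝ᵥ v := by
      rw [star_mulVec, hSH, dotProduct_mulVec, vecMul_vecMul,
        Matrix.mul_nonsing_inv _ hSu, vecMul_one]
    have h3 : star (S⁻¹ *ᵥ v) ⬝ᵥ (S⁻¹ *ᵥ v) = star v ⬝ᵥ B⁻¹ *ᵥ v := by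
      rw [star_mulVec, Matrix.conjTranspose_nonsing_inv, hSH, dotProduct_mulVec,
        vecMul_vecMul, ← Matrix.mul_inv_rev, hSS, ← dotProduct_mulVec]
    -- Cauchy-Schwarz
    have hcs : (star φ ⬝ᵥ v).re ≤ Real.sqrt x * Real.sqrt t := by
      have key := re_inner_le_norm (𝕜 := ℂ)
        ((WithLp.equiv 2 (Fin N → ℂ)).symm (S *ᵥ φ))
        ((WithLp.equiv 2 (Fin N → ℂ)).symm (S⁻¹ *ᵥ v))
      rw [norm_eq_sqrt_re_inner (𝕜 := ℂ), norm_eq_sqrt_re_inner (𝕜 := ℂ)] at key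
      simp only [WithLp.equiv_symm_apply, EuclideanSpace.inner_toLp_toLp, RCLike.re_to_complex] at key
      rw [dotProduct_comm (S *ᵥ φ) (star (S *ᵥ φ)), dotProduct_comm (S⁻¹ *ᵥ v) (star (S *ᵥ φ)),
        dotProduct_comm (S⁻¹ *ᵥ v) (star (S⁻¹ *ᵥ v))] at key
      rw [h1, h2, h3] at key
      rwa [hxdef, htdef]
    have hchain : l * x ≤ Real.sqrt x * Real.sqrt t := by
      rw [hsplit] at hcs; linarith
    nlinarith [Real.sq_sqrt hx0, Real.sq_sqrt ht0, Real.sqrt_nonneg x, Real.sqrt_nonneg t,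
      mul_le_mul_of_nonneg_left hchain hl0, sq_nonneg (l * Real.sqrt x - Real.sqrt t),
      mul_pos hlpos hlpos]
end
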